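/- Convergence condition for the chi-squared divergence between Gaussian mixtures and a Gaussian: let p₀ = Σ_{j=1}^{i−1} α_j N(μ_j, σ_j² I_e) with Σα_j = 1 and p₁ = N(μ_i, σ_i² I_e). If σ_i² ≥ σ_j² for all j < i, then ∫ p₀(w)²/p₁(w) dw < ∞, i.e., χ²(p₀ ‖ p₁) is finite. -/

import Mathlib

open MeasureTheory

/-- The isotropic Gaussian density on `ℝ^e` with mean `μ` and variance `σ²`. -/
noncomputable def isoGaussianDensity (e : ℕ) (μ : EuclideanSpace ℝ (Fin e))
    (σ : ℝ) (w : EuclideanSpace ℝ (Fin e)) : ℝ :=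
  (2 * Real.pi * σ ^ 2) ^ (-(e : ℝ) / 2) * Real.exp (-‖w - μ‖ ^ 2 / (2 * σ ^ 2))

lemma gauss_integrable (e : ℕ) {b : ℝ} (hb : 0 < b) (d : EuclideanSpace ℝ (Fin e)) :
    Integrable (fun w : EuclideanSpace ℝ (Fin e) => Real.exp (-b * ‖w - d‖ ^ 2)) := by
  have h := (GaussianFourier.integrable_cexp_neg_mul_sq_norm_add
      (V := EuclideanSpace ℝ (Fin e)) (b := (b : ℂ)) (by simpa using hb)
      ((2 * b : ℝ) : ℂ) d).norm
  have h2 : Integrable (fun w : EuclideanSpace ℝ (Fin e) =>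
      Real.exp (-b * ‖w‖ ^ 2 + 2 * b * inner ℝ d w)) := by
    convert h using 2 with w
    rw [Complex.norm_exp]
    congr 1
    have : (-(b:ℂ)) * (‖w‖:ℂ) ^ 2 + ((2*b:ℝ):ℂ) * ((inner ℝ d w : ℝ):ℂ)
        = ((-b * ‖w‖^2 + 2*b*inner ℝ d w : ℝ) : ℂ) := by push_cast; ring
    rw [this, Complex.ofReal_re]
  have := h2.const_mul (Real.exp (-b * ‖d‖ ^ 2))
  convert this using 2 with w
  rw [← Real.exp_add]
  congr 1
  have hid : ‖w - d‖ ^ 2 = ‖w‖ ^ 2 - 2 * inner ℝ w d + ‖d‖ ^ 2 := norm_sub_sq_real w d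
  rw [hid, real_inner_comm d w]
  ring

lemma norm_identity {E : Type*} [NormedAddCommGroup E] [InnerProductSpace ℝ E]
    (w a b c : E) :
    -‖w - a‖ ^ 2 - ‖w - b‖ ^ 2 + ‖w - c‖ ^ 2 =
      -‖w - (a + b - c)‖ ^ 2 + (‖a + b - c‖ ^ 2 - ‖a‖ ^ 2 - ‖b‖ ^ 2 + ‖c‖ ^ 2) := by
  simp only [norm_sub_sq_real, inner_add_right, inner_sub_right]
  ring

/-- **Finiteness of the chi-squared divergence of a Gaussian mixture against a
wider Gaussian.** If `p₀ = Σⱼ αⱼ N(μⱼ, σⱼ² I)` and `p₁ = N(μᵢ, σᵢ² I)` with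
`σᵢ² ≥ σⱼ²` for all `j`, then `∫ p₀(w)²/p₁(w) dw < ∞`. -/
theorem gaussian_mixture_chi_squared_finite
    (e k : ℕ) (α : Fin k → ℝ) (hα0 : ∀ j, 0 ≤ α j) (hα1 : ∑ j, α j = 1)
    (μs : Fin k → EuclideanSpace ℝ (Fin e)) (σs : Fin k → ℝ)
    (hσs : ∀ j, 0 < σs j)
    (μi : EuclideanSpace ℝ (Fin e)) (σi : ℝ) (hσi : 0 < σi)
    (hwide : ∀ j, σs j ^ 2 ≤ σi ^ 2) :
    Integrable
      (fun w => (∑ j, α j * isoGaussianDensity e (μs j) (σs j) w) ^ 2 /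
        isoGaussianDensity e μi σi w)
      (volume : Measure (EuclideanSpace ℝ (Fin e))) := by
  set c0 : ℝ := 2 * σi ^ 2 with hc0def
  have hc0 : 0 < c0 := by positivity
  set A : Fin k → ℝ := fun j => (2 * Real.pi * σs j ^ 2) ^ (-(e : ℝ) / 2) with hA
  set B : ℝ := (2 * Real.pi * σi ^ 2) ^ (-(e : ℝ) / 2) with hB
  have hApos : ∀ j, 0 < A j := fun j => by
    have := hσs j; rw [hA]; positivity
  have hBpos : 0 < B := by rw [hB]; positivity
  -- positivity of densities
  have hpos : ∀ (μ : EuclideanSpace ℝ (Fin e)) (σ : ℝ), 0 < σ →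
      ∀ w, 0 < isoGaussianDensity e μ σ w := by
    intro μ σ hσ w
    unfold isoGaussianDensity
    positivity
  -- the dominating function
  set g : EuclideanSpace ℝ (Fin e) → ℝ := fun w =>
    ∑ j, ∑ j', (α j * A j * (α j' * A j') / B) *
      Real.exp (-‖w - μs j‖ ^ 2 / c0 + -‖w - μs j'‖ ^ 2 / c0 - -‖w - μi‖ ^ 2 / c0)
    with hg
  have hgint : Integrable g := by
    apply integrable_finset_sum
    intro j _
    apply integrable_finset_sum
    intro j' _
    apply Integrable.const_mul
    set d : EuclideanSpace ℝ (Fin e) := μs j + μs j' - μi with hd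
    set r : ℝ := ‖d‖ ^ 2 - ‖μs j‖ ^ 2 - ‖μs j'‖ ^ 2 + ‖μi‖ ^ 2 with hr
    have key : (fun w : EuclideanSpace ℝ (Fin e) =>
        Real.exp (-‖w - μs j‖ ^ 2 / c0 + -‖w - μs j'‖ ^ 2 / c0 - -‖w - μi‖ ^ 2 / c0))
        = fun w => Real.exp (r / c0) * Real.exp (-(1 / c0) * ‖w - d‖ ^ 2) := by
      funext w
      rw [← Real.exp_add]
      congr 1
      have h1 : -‖w - μs j‖ ^ 2 / c0 + -‖w - μs j'‖ ^ 2 / c0 - -‖w - μi‖ ^ 2 / c0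
          = (-‖w - μs j‖ ^ 2 - ‖w - μs j'‖ ^ 2 + ‖w - μi‖ ^ 2) / c0 := by ring
      rw [h1, norm_identity w (μs j) (μs j') μi, ← hd, ← hr]
      field_simp
      ring
    rw [key]
    exact (gauss_integrable e (show (0:ℝ) < 1 / c0 by positivity) d).const_mul _
  -- measurability of the target
  have hcont : Continuous (fun w : EuclideanSpace ℝ (Fin e) =>
      (∑ j, α j * isoGaussianDensity e (μs j) (σs j) w) ^ 2 /
        isoGaussianDensity e μi σi w) := by
    apply Continuous.div
    · apply Continuous.pow
      apply continuous_finset_sum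
      intro j _
      apply Continuous.mul continuous_const
      unfold isoGaussianDensity
      fun_prop
    · unfold isoGaussianDensity
      fun_prop
    · intro w
      exact (hpos μi σi hσi w).ne'
  -- pointwise bound
  refine Integrable.mono' hgint hcont.aestronglyMeasurable (Filter.Eventually.of_forall ?_)
  intro w
  have hden := hpos μi σi hσi w
  have hnum_nonneg : 0 ≤ ∑ j, α j * isoGaussianDensity e (μs j) (σs j) w :=
    Finset.sum_nonneg fun j _ => mul_nonneg (hα0 j) (hpos (μs j) (σs j) (hσs j) w).le
  have hf_nonneg : 0 ≤ (∑ j, α j * isoGaussianDensity e (μs j) (σs j) w) ^ 2 /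
      isoGaussianDensity e μi σi w := div_nonneg (by positivity) hden.le
  rw [Real.norm_eq_abs, abs_of_nonneg hf_nonneg]
  -- step 1: bound each component density
  set S : ℝ := ∑ j, (α j * A j) * Real.exp (-‖w - μs j‖ ^ 2 / c0) with hS
  have hstep1 : ∑ j, α j * isoGaussianDensity e (μs j) (σs j) w ≤ S := by
    apply Finset.sum_le_sum
    intro j _
    unfold isoGaussianDensity
    have hAj : (2 * Real.pi * σs j ^ 2) ^ (-(e:ℝ)/2) = A j := rfl
    rw [hAj, ← mul_assoc]
    apply mul_le_mul_of_nonneg_left _ (mul_nonneg (hα0 j) (hApos j).le)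
    apply Real.exp_le_exp.mpr
    rw [neg_div, neg_div, neg_le_neg_iff]
    have h2σ : 0 < 2 * σs j ^ 2 := by have := hσs j; positivity
    have hle : 2 * σs j ^ 2 ≤ c0 := by
      rw [hc0def]; nlinarith [hwide j]
    gcongr
  have hSnonneg : 0 ≤ S :=
    Finset.sum_nonneg fun j _ =>
      mul_nonneg (mul_nonneg (hα0 j) (hApos j).le) (Real.exp_pos _).le
  have hstep2 : (∑ j, α j * isoGaussianDensity e (μs j) (σs j) w) ^ 2 ≤ S ^ 2 := by
    apply pow_le_pow_left₀ hnum_nonneg hstep1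
  have hstep3 : (∑ j, α j * isoGaussianDensity e (μs j) (σs j) w) ^ 2 /
      isoGaussianDensity e μi σi w ≤ S ^ 2 / isoGaussianDensity e μi σi w := by
    gcongr
  refine hstep3.trans_eq ?_
  -- identity: S^2 / p₁ w = g w
  rw [hg]
  unfold isoGaussianDensity
  rw [← hB]
  rw [sq, hS, Finset.sum_mul_sum, Finset.sum_div]
  apply Finset.sum_congr rfl
  intro j _
  rw [Finset.sum_div]
  apply Finset.sum_congr rfl
  intro j' _
  have hexp : Real.exp (-‖w - μi‖ ^ 2 / (2 * σi ^ 2)) ≠ 0 := (Real.exp_pos _).ne'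
  rw [Real.exp_sub, Real.exp_add]
  rw [hc0def]
  field_simp
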